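/- For every star expression e, the identity function on the set of iterated derivatives of e is a provable solution (in BBP) of the chart interpretation of e: for every iterated derivative f of e with transitions f →a_i √ (i=1..m) and f →b_j f_j (f_j ≠ √), BBP proves f = (Σ a_i) + (Σ b_j · f_j). -/

import Mathlib

/-- Star expressions over an alphabet `A` (without the constant 1, with binary Kleene star). -/
inductive StarExp (A : Type) : Type
  | zero : StarExp A
  | act : A → StarExp A
  | sum : StarExp A → StarExp A → StarExp A
  | prod : StarExp A → StarExp A → StarExp A
  | star : StarExp A → StarExp A → StarExp A

namespace StarExp

/-- The star height of a star expression. -/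
def height {A : Type} : StarExp A → ℕ
  | zero => 0
  | act _ => 0
  | sum e1 e2 => max e1.height e2.height
  | prod e1 e2 => max e1.height e2.height
  | star e1 e2 => max (e1.height + 1) e2.height

end StarExp
/-- The transition system of the process semantics: `Step e a ξ` means `e —a→ ξ`,
where `ξ` is either a star expression (`some e'`) or the termination symbol √ (`none`). -/
inductive Step {A : Type} : StarExp A → A → Option (StarExp A) → Prop
  | act (a : A) : Step (.act a) a none
  | sum_left {e1 : StarExp A} {a : A} {ξ : Option (StarExp A)} (e2 : StarExp A) :
      Step e1 a ξ → Step (.sum e1 e2) a ξ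
  | sum_right {e2 : StarExp A} {a : A} {ξ : Option (StarExp A)} (e1 : StarExp A) :
      Step e2 a ξ → Step (.sum e1 e2) a ξ
  | prod_left {e1 e1' : StarExp A} {a : A} (e2 : StarExp A) :
      Step e1 a (some e1') → Step (.prod e1 e2) a (some (.prod e1' e2))
  | prod_tick {e1 : StarExp A} {a : A} (e2 : StarExp A) :
      Step e1 a none → Step (.prod e1 e2) a (some e2)
  | star_left {e1 e1' : StarExp A} {a : A} (e2 : StarExp A) :
      Step e1 a (some e1') → Step (.star e1 e2) a (some (.prod e1' (.star e1 e2)))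
  | star_tick {e1 : StarExp A} {a : A} (e2 : StarExp A) :
      Step e1 a none → Step (.star e1 e2) a (some (.star e1 e2))
  | star_right {e2 : StarExp A} {a : A} {ξ : Option (StarExp A)} (e1 : StarExp A) :
      Step e2 a ξ → Step (.star e1 e2) a ξ

/-- Provable equality in the proof system BBP: equational logic together with the
axioms (B1)–(B7), (BKS1), (BKS2) and the fixed-point rule RSP*. -/
inductive BBP {A : Type} : StarExp A → StarExp A → Prop
  | refl (e : StarExp A) : BBP e e
  | symm {e f : StarExp A} : BBP e f → BBP f e
  | trans {e f g : StarExp A} : BBP e f → BBP f g → BBP e g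
  | sum_congr {e1 e2 f1 f2 : StarExp A} :
      BBP e1 f1 → BBP e2 f2 → BBP (.sum e1 e2) (.sum f1 f2)
  | prod_congr {e1 e2 f1 f2 : StarExp A} :
      BBP e1 f1 → BBP e2 f2 → BBP (.prod e1 e2) (.prod f1 f2)
  | star_congr {e1 e2 f1 f2 : StarExp A} :
      BBP e1 f1 → BBP e2 f2 → BBP (.star e1 e2) (.star f1 f2)
  | B1 (x y : StarExp A) : BBP (.sum x y) (.sum y x)
  | B2 (x y z : StarExp A) : BBP (.sum (.sum x y) z) (.sum x (.sum y z))
  | B3 (x : StarExp A) : BBP (.sum x x) x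
  | B4 (x y z : StarExp A) : BBP (.prod (.sum x y) z) (.sum (.prod x z) (.prod y z))
  | B5 (x y z : StarExp A) : BBP (.prod (.prod x y) z) (.prod x (.prod y z))
  | B6 (x : StarExp A) : BBP (.sum x .zero) x
  | B7 (x : StarExp A) : BBP (.prod .zero x) .zero
  | BKS1 (x y : StarExp A) : BBP (.sum (.prod x (.star x y)) y) (.star x y)
  | BKS2 (x y z : StarExp A) : BBP (.prod (.star x y) z) (.star x (.prod y z))
  | RSP {x y z : StarExp A} : BBP x (.sum (.prod y x) z) → BBP x (.star y z)

/-- The sum `Σ_{i=1}^k e_i` of a list of star expressions: `0` for the empty list,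
`e` for a singleton, and otherwise nested to the left. -/
def sumList {A : Type} : List (StarExp A) → StarExp A
  | [] => StarExp.zero
  | e :: es => es.foldl StarExp.sum e

/-- `f` is an iterated derivative of `e`: `f` is reachable from `e` via the
transition rules of the process-semantics TSS. -/
def IterDeriv {A : Type} (e f : StarExp A) : Prop :=
  Relation.ReflTransGen (fun x y => ∃ a : A, Step x a (some y)) e f

section Aux

variable {A : Type}

private lemma bbp_sum_left_comm (x y z : StarExp A) :
    BBP (.sum x (.sum y z)) (.sum y (.sum x z)) :=
  (BBP.B2 x y z).symm.trans ((BBP.sum_congr (BBP.B1 x y) (BBP.refl z)).trans (BBP.B2 y x z))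

private lemma bbp_foldl_sum (acc : StarExp A) (l : List (StarExp A)) :
    BBP (l.foldl StarExp.sum acc) (StarExp.sum acc (sumList l)) := by
  induction l generalizing acc with
  | nil => exact (BBP.B6 acc).symm
  | cons x l ih =>
      simp only [List.foldl_cons]
      refine (ih (acc.sum x)).trans ?_
      refine (BBP.B2 acc x (sumList l)).trans ?_
      exact BBP.sum_congr (BBP.refl acc) ((ih x).symm)

private lemma bbp_sumList_cons (x : StarExp A) (l : List (StarExp A)) :
    BBP (sumList (x :: l)) (StarExp.sum x (sumList l)) :=
  bbp_foldl_sum x l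

private lemma bbp_absorb {x : StarExp A} {l : List (StarExp A)} (h : x ∈ l) :
    BBP (StarExp.sum x (sumList l)) (sumList l) := by
  induction l with
  | nil => cases h
  | cons y l ih =>
      rcases List.mem_cons.mp h with rfl | h
      · refine (BBP.sum_congr (BBP.refl x) (bbp_sumList_cons x l)).trans ?_
        refine ((BBP.B2 x x (sumList l)).symm).trans ?_
        refine (BBP.sum_congr (BBP.B3 x) (BBP.refl _)).trans ?_
        exact (bbp_sumList_cons x l).symm
      · refine (BBP.sum_congr (BBP.refl x) (bbp_sumList_cons y l)).trans ?_
        refine (bbp_sum_left_comm x y (sumList l)).trans ?_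
        refine (BBP.sum_congr (BBP.refl y) (ih h)).trans ?_
        exact (bbp_sumList_cons y l).symm

private lemma bbp_subset_absorb {l1 l2 : List (StarExp A)} (h : ∀ x ∈ l1, x ∈ l2) :
    BBP (StarExp.sum (sumList l1) (sumList l2)) (sumList l2) := by
  induction l1 with
  | nil => exact (BBP.B1 _ _).trans (BBP.B6 _)
  | cons x l1 ih =>
      refine (BBP.sum_congr (bbp_sumList_cons x l1) (BBP.refl _)).trans ?_
      refine (BBP.B2 x (sumList l1) (sumList l2)).trans ?_
      refine (BBP.sum_congr (BBP.refl x) (ih fun y hy => h y (List.mem_cons_of_mem x hy))).trans ?_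
      exact bbp_absorb (h x List.mem_cons_self)

private lemma bbp_sumList_mem_iff {l1 l2 : List (StarExp A)} (h : ∀ x, x ∈ l1 ↔ x ∈ l2) :
    BBP (sumList l1) (sumList l2) := by
  have h1 : BBP (StarExp.sum (sumList l2) (sumList l1)) (sumList l1) :=
    bbp_subset_absorb fun x hx => (h x).mpr hx
  have h2 : BBP (StarExp.sum (sumList l1) (sumList l2)) (sumList l2) :=
    bbp_subset_absorb fun x hx => (h x).mp hx
  exact h1.symm.trans ((BBP.B1 _ _).trans h2)

private lemma bbp_sumList_append (l1 l2 : List (StarExp A)) :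
    BBP (sumList (l1 ++ l2)) (StarExp.sum (sumList l1) (sumList l2)) := by
  induction l1 with
  | nil => exact ((BBP.B1 _ _).trans (BBP.B6 _)).symm
  | cons x l1 ih =>
      refine (bbp_sumList_cons x (l1 ++ l2)).trans ?_
      refine (BBP.sum_congr (BBP.refl x) ih).trans ?_
      refine ((BBP.B2 x (sumList l1) (sumList l2)).symm).trans ?_
      exact BBP.sum_congr (bbp_sumList_cons x l1).symm (BBP.refl _)

private lemma bbp_sumList_forall₂ {l1 l2 : List (StarExp A)} (h : List.Forall₂ BBP l1 l2) :
    BBP (sumList l1) (sumList l2) := by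
  induction h with
  | nil => exact BBP.refl _
  | cons hxy _ ih =>
      refine (bbp_sumList_cons _ _).trans ?_
      exact (BBP.sum_congr hxy ih).trans (bbp_sumList_cons _ _).symm

private lemma bbp_sumList_map_congr {α : Type*} (l : List α) (f g : α → StarExp A)
    (h : ∀ x, BBP (f x) (g x)) :
    BBP (sumList (l.map f)) (sumList (l.map g)) := by
  refine bbp_sumList_forall₂ ?_
  induction l with
  | nil => exact List.Forall₂.nil
  | cons x l ih => exact List.Forall₂.cons (h x) ih

private lemma bbp_sumList_distrib (l : List (StarExp A)) (z : StarExp A) :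
    BBP (StarExp.prod (sumList l) z) (sumList (l.map fun x => StarExp.prod x z)) := by
  induction l with
  | nil => exact BBP.B7 z
  | cons x l ih =>
      refine (BBP.prod_congr (bbp_sumList_cons x l) (BBP.refl z)).trans ?_
      refine (BBP.B4 x (sumList l) z).trans ?_
      refine (BBP.sum_congr (BBP.refl _) ih).trans ?_
      exact (bbp_sumList_cons _ _).symm

/-- Actions `a` with `f —a→ √`. -/
def ticks {A : Type} : StarExp A → List A
  | .zero => []
  | .act a => [a]
  | .sum e1 e2 => ticks e1 ++ ticks e2
  | .prod _ _ => []
  | .star _ e2 => ticks e2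

/-- Pairs `(a, f')` with `f —a→ f'`. -/
def moves {A : Type} : StarExp A → List (A × StarExp A)
  | .zero => []
  | .act _ => []
  | .sum e1 e2 => moves e1 ++ moves e2
  | .prod e1 e2 => ((moves e1).map fun p => (p.1, StarExp.prod p.2 e2))
      ++ ((ticks e1).map fun a => (a, e2))
  | .star e1 e2 => ((moves e1).map fun p => (p.1, StarExp.prod p.2 (StarExp.star e1 e2)))
      ++ ((ticks e1).map fun a => (a, StarExp.star e1 e2))
      ++ moves e2

private lemma step_of_mem : ∀ (f : StarExp A),
    (∀ a ∈ ticks f, Step f a none) ∧ (∀ p ∈ moves f, Step f p.1 (some p.2))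
  | .zero => by constructor <;> intro x hx <;> simp [ticks, moves] at hx
  | .act b => by
      refine ⟨fun x hx => ?_, fun p hp => by simp [moves] at hp⟩
      simp only [ticks, List.mem_singleton] at hx
      subst hx
      exact Step.act x
  | .sum e1 e2 => by
      obtain ⟨t1, m1⟩ := step_of_mem e1
      obtain ⟨t2, m2⟩ := step_of_mem e2
      constructor <;> intro x hx <;> simp only [ticks, moves, List.mem_append] at hx
      · rcases hx with h | h
        · exact Step.sum_left e2 (t1 x h)
        · exact Step.sum_right e1 (t2 x h)
      · rcases hx with h | h
        · exact Step.sum_left e2 (m1 x h)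
        · exact Step.sum_right e1 (m2 x h)
  | .prod e1 e2 => by
      obtain ⟨t1, m1⟩ := step_of_mem e1
      constructor <;> intro x hx
      · simp [ticks] at hx
      · simp only [moves, List.mem_append, List.mem_map] at hx
        rcases hx with ⟨p, hp, rfl⟩ | ⟨a, ha, rfl⟩
        · exact Step.prod_left e2 (m1 p hp)
        · exact Step.prod_tick e2 (t1 a ha)
  | .star e1 e2 => by
      obtain ⟨t1, m1⟩ := step_of_mem e1
      obtain ⟨t2, m2⟩ := step_of_mem e2
      constructor <;> intro x hx <;>
        simp only [ticks, moves, List.mem_append, List.mem_map] at hx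
      · exact Step.star_right e1 (t2 x hx)
      · rcases hx with (⟨p, hp, rfl⟩ | ⟨a, ha, rfl⟩) | h
        · exact Step.star_left e2 (m1 p hp)
        · exact Step.star_tick e2 (t1 a ha)
        · exact Step.star_right e1 (m2 x h)

private lemma mem_of_step {f : StarExp A} {a : A} {ξ : Option (StarExp A)} (h : Step f a ξ) :
    (ξ = none → a ∈ ticks f) ∧ (∀ f', ξ = some f' → (a, f') ∈ moves f) := by
  induction h with
  | act b => exact ⟨fun _ => by simp [ticks], fun f' h => by cases h⟩
  | sum_left e2 _ ih =>
      refine ⟨fun h => List.mem_append_left _ (ih.1 h), fun f' h => ?_⟩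
      exact List.mem_append_left _ (ih.2 f' h)
  | sum_right e1 _ ih =>
      refine ⟨fun h => List.mem_append_right _ (ih.1 h), fun f' h => ?_⟩
      exact List.mem_append_right _ (ih.2 f' h)
  | prod_left e2 _ ih =>
      refine ⟨fun h => (by cases h), fun f' h => ?_⟩
      cases h
      exact List.mem_append_left _ (List.mem_map.mpr ⟨_, ih.2 _ rfl, rfl⟩)
  | prod_tick e2 _ ih =>
      refine ⟨fun h => (by cases h), fun f' h => ?_⟩
      cases h
      exact List.mem_append_right _ (List.mem_map.mpr ⟨_, ih.1 rfl, rfl⟩)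
  | star_left e2 _ ih =>
      refine ⟨fun h => (by cases h), fun f' h => ?_⟩
      cases h
      exact List.mem_append_left _
        (List.mem_append_left _ (List.mem_map.mpr ⟨_, ih.2 _ rfl, rfl⟩))
  | star_tick e2 _ ih =>
      refine ⟨fun h => (by cases h), fun f' h => ?_⟩
      cases h
      exact List.mem_append_left _
        (List.mem_append_right _ (List.mem_map.mpr ⟨_, ih.1 rfl, rfl⟩))
  | star_right e1 _ ih =>
      exact ⟨fun h => ih.1 h, fun f' h => List.mem_append_right _ (ih.2 f' h)⟩

lemma mem_ticks_iff (f : StarExp A) (a : A) : a ∈ ticks f ↔ Step f a none :=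
  ⟨fun h => (step_of_mem f).1 a h, fun h => (mem_of_step h).1 rfl⟩

lemma mem_moves_iff (f : StarExp A) (p : A × StarExp A) :
    p ∈ moves f ↔ Step f p.1 (some p.2) :=
  ⟨fun h => (step_of_mem f).2 p h, fun h => (mem_of_step h).2 p.2 rfl⟩

/-- Flat list of summands of the canonical expansion. -/
def flat {A : Type} (f : StarExp A) : List (StarExp A) :=
  ((ticks f).map StarExp.act) ++ ((moves f).map fun p => StarExp.prod (StarExp.act p.1) p.2)

private lemma bbp_prod_flat {e : StarExp A} (z : StarExp A)
    (he : BBP e (sumList (flat e))) :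
    BBP (StarExp.prod e z)
      (sumList (((ticks e).map fun a => StarExp.prod (StarExp.act a) z)
        ++ ((moves e).map fun p => StarExp.prod (StarExp.act p.1) (StarExp.prod p.2 z)))) := by
  refine (BBP.prod_congr he (BBP.refl z)).trans ?_
  refine (bbp_sumList_distrib (flat e) z).trans ?_
  unfold flat
  rw [List.map_append, List.map_map, List.map_map]
  refine (bbp_sumList_append _ _).trans ?_
  refine BBP.trans (BBP.sum_congr (BBP.refl _) ?_) (bbp_sumList_append _ _).symm
  refine bbp_sumList_map_congr _ _ _ fun p => ?_
  exact BBP.B5 (StarExp.act p.1) p.2 z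

private lemma bbp_expansion : ∀ f : StarExp A, BBP f (sumList (flat f))
  | .zero => by
      show BBP StarExp.zero (sumList [])
      exact BBP.refl _
  | .act a => by
      show BBP (StarExp.act a) (sumList [StarExp.act a])
      exact BBP.refl _
  | .sum e1 e2 => by
      have h1 := bbp_expansion e1
      have h2 := bbp_expansion e2
      refine (BBP.sum_congr h1 h2).trans ?_
      refine (bbp_sumList_append (flat e1) (flat e2)).symm.trans ?_
      refine bbp_sumList_mem_iff fun x => ?_
      simp only [flat, ticks, moves, List.mem_append, List.mem_map, List.map_append]
      aesop
  | .prod e1 e2 => by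
      have h1 := bbp_prod_flat e2 (bbp_expansion e1)
      refine h1.trans ?_
      refine bbp_sumList_mem_iff fun x => ?_
      simp only [flat, ticks, moves, List.mem_append, List.mem_map, List.map_append,
        List.map_map, List.map_nil, List.not_mem_nil, Function.comp]
      aesop
  | .star e1 e2 => by
      have h1 := bbp_prod_flat (StarExp.star e1 e2) (bbp_expansion e1)
      have h2 := bbp_expansion e2
      refine (BBP.BKS1 e1 e2).symm.trans ?_
      refine (BBP.sum_congr h1 h2).trans ?_
      refine (bbp_sumList_append _ _).symm.trans ?_
      refine bbp_sumList_mem_iff fun x => ?_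
      simp only [flat, ticks, moves, List.mem_append, List.mem_map, List.map_append,
        List.map_map, Function.comp]
      aesop

end Aux

/-- The identity function on the iterated derivatives of `e` is a provable solution
of the chart interpretation of `e`: for every iterated derivative `f` of `e`, if
`as` enumerates the actions of the transitions `f —a→ √` and `bs` enumerates the
pairs of the transitions `f —b→ f'` with `f' ≠ √`, then BBP proves
`f = (Σ a_i) + (Σ b_j · f_j)`. -/
theorem id_is_provable_solution {A : Type} (e f : StarExp A) (hf : IterDeriv e f)
    (as : List A) (bs : List (A × StarExp A))
    (has : ∀ a : A, a ∈ as ↔ Step f a none)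
    (hbs : ∀ p : A × StarExp A, p ∈ bs ↔ Step f p.1 (some p.2)) :
    BBP f (StarExp.sum (sumList (as.map StarExp.act))
      (sumList (bs.map fun p => StarExp.prod (StarExp.act p.1) p.2))) := by
  refine (bbp_expansion f).trans ?_
  refine (bbp_sumList_append _ _).trans ?_
  refine BBP.sum_congr (bbp_sumList_mem_iff fun x => ?_) (bbp_sumList_mem_iff fun x => ?_)
  · simp only [List.mem_map, mem_ticks_iff, has]
  · simp only [List.mem_map, mem_moves_iff, hbs]
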